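/- arXiv:2003.00462 — 3 statements merged into one kernel-verified Lean document; each statement's English description precedes it below -/
import Mathlib

section
/- Let π: L(p) → L(q) be an admissible homomorphism. Then δ_p(ω) and δ_q(ω') have the same sign (both negative, both zero, or both positive), where ω and ω' are the dualizing elements and δ_p, δ_q are the degree maps. Consequently L(p) is of domestic, tubular, or wild type if and only if L(q) is of the same type. -/
open scoped BigOperators

def stringRelators {ι : Type} [DecidableEq ι] (p : ι → ℕ) : Set (ι → ℤ) :=
  { v | ∃ i j : ι, v = (p i : ℤ) • Pi.single i 1 - (p j : ℤ) • Pi.single j 1 }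

abbrev StringGroup {ι : Type} [DecidableEq ι] (p : ι → ℕ) : Type :=
  (ι → ℤ) ⧸ AddSubgroup.closure (stringRelators p)

def xgen {ι : Type} [DecidableEq ι] (p : ι → ℕ) (i : ι) : StringGroup p :=
  QuotientAddGroup.mk (Pi.single i 1)

def canon {ι : Type} [DecidableEq ι] (p : ι → ℕ) (i : ι) : StringGroup p :=
  (p i : ℤ) • xgen p i

def IsEffective {κ : Type} [DecidableEq κ] (q : κ → ℕ) (H : AddSubgroup (StringGroup q)) : Prop :=
  ∀ j : κ, ∀ ρ : StringGroup q →+ ZMod (q j),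
    (∀ k, ρ (xgen q k) = if k = j then 1 else 0) →
    ∀ y : ZMod (q j), ∃ x ∈ H, ρ x = y

def Admissible {ι κ : Type} [DecidableEq ι] [DecidableEq κ]
    (p : ι → ℕ) (q : κ → ℕ)
    (multp : StringGroup p → ℕ) (multq : StringGroup q → ℕ)
    (π : StringGroup p →+ StringGroup q) : Prop :=
  IsEffective q π.range ∧
  ∀ z ∈ Set.range π, (∑ᶠ x ∈ π ⁻¹' {z}, multp x) = multq z

namespace SA

variable {t : ℕ} (p : Fin (t+1) → ℕ)

/-- mk as an AddMonoidHom -/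
def mkh : (Fin (t+1) → ℤ) →+ StringGroup p := QuotientAddGroup.mk' _

lemma mkh_single (i : Fin (t+1)) : mkh p (Pi.single i 1) = xgen p i := rfl

lemma mkh_relator_zero {i j : Fin (t+1)} :
    mkh p ((p i : ℤ) • Pi.single i 1 - (p j : ℤ) • Pi.single j 1) = 0 := by
  rw [mkh, QuotientAddGroup.mk'_apply, QuotientAddGroup.eq_zero_iff]
  exact AddSubgroup.subset_closure ⟨i, j, rfl⟩

lemma canon_eq (i : Fin (t+1)) : canon p i = canon p 0 := by
  have h := mkh_relator_zero p (i := i) (j := 0)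
  rw [map_sub, map_zsmul, map_zsmul, sub_eq_zero, mkh_single, mkh_single] at h
  exact h

lemma canon_eq_smul (i : Fin (t+1)) : (p i : ℤ) • xgen p i = canon p 0 := canon_eq p i

lemma single_smul_eq (i : Fin (t+1)) (c : ℤ) :
    c • (Pi.single i (1:ℤ) : Fin (t+1) → ℤ) = Pi.single i c := by
  funext j
  by_cases h : j = i <;> simp [Pi.single_apply, h]

lemma exists_decomp (hp : ∀ i, 2 ≤ p i) (x : StringGroup p) : ∃ l : Fin (t+1) → ℤ, ∃ m : ℤ,
    (∀ i, 0 ≤ l i ∧ l i < (p i : ℤ)) ∧ x = ∑ i, l i • xgen p i + m • canon p 0 := by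
  obtain ⟨v, rfl⟩ := QuotientAddGroup.mk'_surjective (AddSubgroup.closure (stringRelators p)) x
  have hpi : ∀ i, (0:ℤ) < (p i : ℤ) := fun i => by have := hp i; omega
  refine ⟨fun i => v i % (p i), ∑ i, v i / (p i), fun i =>
    ⟨Int.emod_nonneg _ (ne_of_gt (hpi i)), Int.emod_lt_of_pos _ (hpi i)⟩, ?_⟩
  have key : ∀ i : Fin (t+1), (v i % p i) • xgen p i + (v i / p i) • canon p 0
      = mkh p (Pi.single i (v i)) := by
    intro i
    rw [← canon_eq p i, canon, ← mul_zsmul, ← add_zsmul]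
    have h2 : v i % (p i : ℤ) + v i / (p i : ℤ) * (p i : ℤ) = v i := Int.emod_add_ediv_mul (v i) (p i)
    rw [h2, ← mkh_single, ← map_zsmul, single_smul_eq]
  calc QuotientAddGroup.mk' _ v = mkh p v := rfl
    _ = mkh p (∑ i, Pi.single i (v i)) := by rw [Finset.univ_sum_single]
    _ = ∑ i, mkh p (Pi.single i (v i)) := map_sum _ _ _
    _ = ∑ i, ((v i % p i) • xgen p i + (v i / p i) • canon p 0) := by
        simp only [key]
    _ = ∑ i, (v i % p i) • xgen p i + (∑ i, v i / p i) • canon p 0 := by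
        have h3 : (∑ i, v i / (p i : ℤ)) • canon p 0 = ∑ i : Fin (t+1), (v i / p i) • canon p 0 :=
          map_sum (zmultiplesHom _ (canon p 0)) _ _
        rw [Finset.sum_add_distrib, h3]

/-- residue homomorphism -/
def rho (j : Fin (t+1)) : StringGroup p →+ ZMod (p j) :=
  QuotientAddGroup.lift _ ((Int.castAddHom (ZMod (p j))).comp (Pi.evalAddMonoidHom (fun _ => ℤ) j))
    (by
      refine (AddSubgroup.closure_le _).mpr ?_
      rintro v ⟨i, k, rfl⟩
      simp only [SetLike.mem_coe, AddMonoidHom.mem_ker, AddMonoidHom.comp_apply,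
        Pi.evalAddMonoidHom_apply, Pi.sub_apply, Pi.smul_apply, smul_eq_mul,
        Pi.single_apply, Int.coe_castAddHom, mul_ite, mul_one, mul_zero]
      split_ifs <;> subst_vars <;> simp)

lemma rho_xgen (j i : Fin (t+1)) : rho p j (xgen p i) = if i = j then 1 else 0 := by
  have h : rho p j (xgen p i)
      = ((Int.castAddHom (ZMod (p j))).comp (Pi.evalAddMonoidHom (fun _ => ℤ) j))
          (Pi.single i 1) := QuotientAddGroup.lift_mk _ _ _
  rw [h]
  simp only [AddMonoidHom.comp_apply, Pi.evalAddMonoidHom_apply, Int.coe_castAddHom,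
    Pi.single_apply]
  rcases eq_or_ne j i with rfl | hne
  · simp
  · rw [if_neg hne, if_neg (fun hh => hne hh.symm)]
    simp

lemma rho_canon (j : Fin (t+1)) : rho p j (canon p 0) = 0 := by
  rw [← canon_eq p j, canon, map_zsmul, rho_xgen, if_pos rfl, zsmul_eq_mul, mul_one]
  exact_mod_cast ZMod.natCast_self (p j)

lemma rho_form (j : Fin (t+1)) (l : Fin (t+1) → ℤ) (m : ℤ) :
    rho p j (∑ i, l i • xgen p i + m • canon p 0) = ((l j : ℤ) : ZMod (p j)) := by
  rw [map_add, map_zsmul, rho_canon, smul_zero, add_zero, map_sum]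
  simp only [map_zsmul]
  have h : ∀ i, l i • rho p j (xgen p i) = if i = j then ((l i : ℤ) : ZMod (p j)) else 0 := by
    intro i
    rw [rho_xgen]
    split_ifs <;> simp [zsmul_eq_mul]
  rw [Finset.sum_congr rfl (fun i _ => h i), Finset.sum_ite_eq' Finset.univ j]
  simp


section Deg

lemma hw (hp : ∀ i, 2 ≤ p i) (i : Fin (t+1)) :
    (((Finset.univ.lcm p) / p i : ℕ) : ℤ) * (p i : ℤ) = ((Finset.univ.lcm p : ℕ) : ℤ) := by
  have hd : p i ∣ Finset.univ.lcm p := Finset.dvd_lcm (Finset.mem_univ i)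
  exact_mod_cast congrArg (Nat.cast : ℕ → ℤ) (Nat.div_mul_cancel hd)

lemma hP1 (hp : ∀ i, 2 ≤ p i) : 1 ≤ ((Finset.univ.lcm p : ℕ) : ℤ) := by
  have : Finset.univ.lcm p ≠ 0 := by
    intro h0
    rw [Finset.lcm_eq_zero_iff] at h0
    obtain ⟨i, _, hi⟩ := h0
    have := hp i
    omega
  omega

variable (δ : StringGroup p →+ ℤ)

lemma delta_canon (hp : ∀ i, 2 ≤ p i)
    (hδ : ∀ i, δ (xgen p i) = ((Finset.univ.lcm p) / p i : ℕ)) : δ (canon p 0) = ((Finset.univ.lcm p : ℕ) : ℤ) := by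
  rw [canon, map_zsmul, hδ, zsmul_eq_mul, mul_comm]
  exact hw p hp 0

lemma delta_form (hp : ∀ i, 2 ≤ p i)
    (hδ : ∀ i, δ (xgen p i) = ((Finset.univ.lcm p) / p i : ℕ)) (l : Fin (t+1) → ℤ) (m : ℤ) :
    δ (∑ i, l i • xgen p i + m • canon p 0)
      = ∑ i, l i * (((Finset.univ.lcm p) / p i : ℕ) : ℤ) + m * ((Finset.univ.lcm p : ℕ) : ℤ) := by
  rw [map_add, map_zsmul, delta_canon p δ hp hδ, map_sum, zsmul_eq_mul]
  congr 1
  refine Finset.sum_congr rfl fun i _ => ?_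
  rw [map_zsmul, hδ, zsmul_eq_mul, Int.cast_id]

lemma decomp_unique (hp : ∀ i, 2 ≤ p i)
    (hδ : ∀ i, δ (xgen p i) = ((Finset.univ.lcm p) / p i : ℕ)) {l l' : Fin (t+1) → ℤ} {m m' : ℤ}
    (hb : ∀ i, 0 ≤ l i ∧ l i < (p i : ℤ)) (hb' : ∀ i, 0 ≤ l' i ∧ l' i < (p i : ℤ))
    (h : ∑ i, l i • xgen p i + m • canon p 0 = ∑ i, l' i • xgen p i + m' • canon p 0) :
    l = l' ∧ m = m' := by
  have hl : l = l' := by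
    funext j
    have hr := congrArg (rho p j) h
    rw [rho_form, rho_form] at hr
    have hdvd : ((p j : ℕ) : ℤ) ∣ (l j - l' j) := by
      rwa [← ZMod.intCast_zmod_eq_zero_iff_dvd, Int.cast_sub, sub_eq_zero]
    obtain ⟨k, hk⟩ := hdvd
    have h1 := (hb j).1; have h2 := (hb j).2; have h3 := (hb' j).1; have h4 := (hb' j).2
    have hpj : (0:ℤ) < (p j : ℤ) := by have := hp j; omega
    have : k = 0 := by nlinarith
    rw [this, mul_zero] at hk
    omega
  refine ⟨hl, ?_⟩
  subst hl
  have hd := congrArg δ h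
  rw [delta_form p δ hp hδ, delta_form p δ hp hδ] at hd
  have := hP1 p hp
  have : m * ((Finset.univ.lcm p : ℕ) : ℤ) = m' * ((Finset.univ.lcm p : ℕ) : ℤ) := by omega
  have hP := hP1 p hp
  nlinarith [this]

end Deg

section Choice
variable (hp : ∀ i, 2 ≤ p i)

noncomputable def lfun (x : StringGroup p) : Fin (t+1) → ℤ := (exists_decomp p hp x).choose
noncomputable def mfun (x : StringGroup p) : ℤ := (exists_decomp p hp x).choose_spec.choose

lemma lfun_bounds (x : StringGroup p) : ∀ i, 0 ≤ lfun p hp x i ∧ lfun p hp x i < (p i : ℤ) :=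
  (exists_decomp p hp x).choose_spec.choose_spec.1

lemma decomp_eq (x : StringGroup p) :
    x = ∑ i, lfun p hp x i • xgen p i + mfun p hp x • canon p 0 :=
  (exists_decomp p hp x).choose_spec.choose_spec.2

variable (δ : StringGroup p →+ ℤ)

/-- recognize a decomposition -/
lemma decomp_spec (hδ : ∀ i, δ (xgen p i) = ((Finset.univ.lcm p) / p i : ℕ))
    {x : StringGroup p} {l : Fin (t+1) → ℤ} {m : ℤ}
    (hb : ∀ i, 0 ≤ l i ∧ l i < (p i : ℤ))
    (h : x = ∑ i, l i • xgen p i + m • canon p 0) :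
    lfun p hp x = l ∧ mfun p hp x = m := by
  exact decomp_unique p δ hp hδ (lfun_bounds p hp x) hb ((decomp_eq p hp x).symm.trans h)

lemma delta_decomp (hδ : ∀ i, δ (xgen p i) = ((Finset.univ.lcm p) / p i : ℕ))
    (x : StringGroup p) :
    δ x = ∑ i, lfun p hp x i * (((Finset.univ.lcm p) / p i : ℕ) : ℤ)
      + mfun p hp x * ((Finset.univ.lcm p : ℕ) : ℤ) := by
  have h := congrArg δ (decomp_eq p hp x)
  rw [delta_form p δ hp hδ] at h
  exact h

lemma lfun_eq_val (x : StringGroup p) (j : Fin (t+1)) :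
    lfun p hp x j = ((rho p j x).val : ℤ) := by
  have h := congrArg (rho p j) (decomp_eq p hp x)
  rw [rho_form] at h
  have hb := lfun_bounds p hp x j
  have hlt : (lfun p hp x j).toNat < p j := by omega
  have : ((lfun p hp x j : ℤ) : ZMod (p j)) = (((lfun p hp x j).toNat : ℕ) : ZMod (p j)) := by
    rw [← Int.cast_natCast]
    congr 1
    omega
  rw [this] at h
  rw [h, ZMod.val_cast_of_lt hlt]
  omega


lemma lfun_mfun_zero (hδ : ∀ i, δ (xgen p i) = ((Finset.univ.lcm p) / p i : ℕ)) :
    lfun p hp (0 : StringGroup p) = 0 ∧ mfun p hp (0 : StringGroup p) = 0 := by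
  have h := decomp_spec p hp δ hδ (x := 0) (l := 0) (m := 0)
    (fun i => by have := hp i; constructor <;> simp <;> omega) (by simp)
  exact h

lemma lfun_mfun_add_smul_canon (hδ : ∀ i, δ (xgen p i) = ((Finset.univ.lcm p) / p i : ℕ))
    (x : StringGroup p) (M : ℤ) :
    lfun p hp (x + M • canon p 0) = lfun p hp x ∧
      mfun p hp (x + M • canon p 0) = mfun p hp x + M := by
  refine decomp_spec p hp δ hδ (lfun_bounds p hp x) ?_
  conv_lhs => rw [decomp_eq p hp x]
  rw [add_zsmul]
  abel

lemma lfun_mfun_add (hδ : ∀ i, δ (xgen p i) = ((Finset.univ.lcm p) / p i : ℕ))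
    (x y : StringGroup p) :
    mfun p hp (x + y) = mfun p hp x + mfun p hp y +
      ((Finset.univ.filter fun i => (p i : ℤ) ≤ lfun p hp x i + lfun p hp y i).card : ℤ) := by
  classical
  let l : Fin (t+1) → ℤ := fun i =>
    lfun p hp x i + lfun p hp y i - (if (p i : ℤ) ≤ lfun p hp x i + lfun p hp y i then (p i : ℤ) else 0)
  have hl : ∀ i, l i = lfun p hp x i + lfun p hp y i
      - (if (p i : ℤ) ≤ lfun p hp x i + lfun p hp y i then (p i : ℤ) else 0) := fun i => rfl
  have hb : ∀ i, 0 ≤ l i ∧ l i < (p i : ℤ) := by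
    intro i
    have h1 := lfun_bounds p hp x i
    have h2 := lfun_bounds p hp y i
    rw [hl i]
    split_ifs with h <;> constructor <;> omega
  have hform : x + y = ∑ i, l i • xgen p i +
      (mfun p hp x + mfun p hp y +
        ((Finset.univ.filter fun i => (p i : ℤ) ≤ lfun p hp x i + lfun p hp y i).card : ℤ))
        • canon p 0 := by
    have hsum : ∑ i, l i • xgen p i
        = ∑ i, (lfun p hp x i + lfun p hp y i) • xgen p i
          - ∑ i, (if (p i : ℤ) ≤ lfun p hp x i + lfun p hp y i then (p i : ℤ) else 0) • xgen p i := by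
      rw [← Finset.sum_sub_distrib]
      refine Finset.sum_congr rfl fun i _ => ?_
      rw [hl i, sub_zsmul]
      abel
    have hite : ∑ i, (if (p i : ℤ) ≤ lfun p hp x i + lfun p hp y i then (p i : ℤ) else 0) • xgen p i
        = ((Finset.univ.filter fun i => (p i : ℤ) ≤ lfun p hp x i + lfun p hp y i).card : ℤ)
            • canon p 0 := by
      have : ∀ i : Fin (t+1),
          (if (p i : ℤ) ≤ lfun p hp x i + lfun p hp y i then (p i : ℤ) else 0) • xgen p i
          = if (p i : ℤ) ≤ lfun p hp x i + lfun p hp y i then canon p 0 else 0 := by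
        intro i
        split_ifs with h
        · exact canon_eq_smul p i
        · exact zero_zsmul _
      rw [Finset.sum_congr rfl fun i _ => this i, Finset.sum_ite, Finset.sum_const,
        Finset.sum_const, smul_zero, add_zero, natCast_zsmul]
    rw [hsum, hite]
    conv_lhs => rw [decomp_eq p hp x, decomp_eq p hp y]
    have hsplit : ∑ i, (lfun p hp x i + lfun p hp y i) • xgen p i
        = ∑ i, lfun p hp x i • xgen p i + ∑ i, lfun p hp y i • xgen p i := by
      rw [← Finset.sum_add_distrib]
      exact Finset.sum_congr rfl fun i _ => add_zsmul _ _ _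
    rw [hsplit, add_zsmul, add_zsmul]
    abel
  exact (decomp_spec p hp δ hδ hb hform).2

lemma eq_smul_of_rho_zero (hδ : ∀ i, δ (xgen p i) = ((Finset.univ.lcm p) / p i : ℕ))
    {a : StringGroup p} (h : ∀ j, rho p j a = 0) :
    (∀ j, lfun p hp a j = 0) ∧ a = mfun p hp a • canon p 0 := by
  have hz : ∀ j, lfun p hp a j = 0 := by
    intro j
    rw [lfun_eq_val p hp a j, h j]
    simp
  constructor
  · exact hz
  · conv_lhs => rw [decomp_eq p hp a]
    have : ∑ i, lfun p hp a i • xgen p i = 0 := by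
      refine Finset.sum_eq_zero fun i _ => ?_
      rw [hz i, zero_zsmul]
    rw [this, zero_add]

lemma mfun_zsmul_of_rho_zero (hδ : ∀ i, δ (xgen p i) = ((Finset.univ.lcm p) / p i : ℕ))
    {a : StringGroup p} (h : ∀ j, rho p j a = 0) (M : ℤ) :
    mfun p hp (M • a) = M * mfun p hp a := by
  have ha := (eq_smul_of_rho_zero p hp δ hδ h).2
  have hform : M • a = ∑ i, (0:ℤ) • xgen p i + (M * mfun p hp a) • canon p 0 := by
    conv_lhs => rw [ha]
    rw [← mul_zsmul]
    simp
  exact (decomp_spec p hp δ hδ (fun i => by have := hp i; constructor <;> simp <;> omega) hform).2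

lemma omega_form :
    (((t : ℕ) + 1 : ℤ) - 2) • canon p 0 - ∑ i, xgen p i
      = ∑ i, ((p i : ℤ) - 1) • xgen p i + (-2 : ℤ) • canon p 0 := by
  have h1 : ∑ i, ((p i:ℤ) - 1) • xgen p i
      = ∑ i, ((p i:ℤ) • xgen p i) - ∑ i, xgen p i := by
    rw [← Finset.sum_sub_distrib]
    refine Finset.sum_congr rfl fun i _ => ?_
    rw [sub_zsmul, one_zsmul]
    abel
  have h2 : ∑ i, ((p i:ℤ) • xgen p i) = (((t:ℕ) + 1 : ℤ)) • canon p 0 := by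
    rw [Finset.sum_congr rfl fun i _ => canon_eq_smul p i, Finset.sum_const, Finset.card_univ,
      Fintype.card_fin, ← natCast_zsmul]
    push_cast
    ring_nf
  rw [h1, h2, sub_zsmul]
  abel

lemma mfun_omega_sub (hδ : ∀ i, δ (xgen p i) = ((Finset.univ.lcm p) / p i : ℕ))
    (x : StringGroup p) :
    mfun p hp ((∑ i, ((p i : ℤ) - 1) • xgen p i + (-2 : ℤ) • canon p 0) - x)
      = -2 - mfun p hp x := by
  have hb : ∀ i, 0 ≤ (p i : ℤ) - 1 - lfun p hp x i ∧ (p i:ℤ) - 1 - lfun p hp x i < (p i:ℤ) := by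
    intro i
    have := lfun_bounds p hp x i
    omega
  have hform : (∑ i, ((p i : ℤ) - 1) • xgen p i + (-2 : ℤ) • canon p 0) - x
      = ∑ i, ((p i:ℤ) - 1 - lfun p hp x i) • xgen p i + (-2 - mfun p hp x) • canon p 0 := by
    conv_lhs => rw [decomp_eq p hp x]
    have hs : ∑ i, ((p i:ℤ) - 1 - lfun p hp x i) • xgen p i
        = ∑ i, ((p i:ℤ) - 1) • xgen p i - ∑ i, lfun p hp x i • xgen p i := by
      rw [← Finset.sum_sub_distrib]
      refine Finset.sum_congr rfl fun i _ => ?_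
      rw [sub_zsmul]
      abel
    rw [hs, sub_zsmul]
    abel
  exact (decomp_spec p hp δ hδ hb hform).2

include hp in
lemma hom_prop (hδ : ∀ i, δ (xgen p i) = ((Finset.univ.lcm p) / p i : ℕ))
    (φ : StringGroup p →+ ℤ) (x : StringGroup p) :
    ((Finset.univ.lcm p : ℕ) : ℤ) * φ x = φ (canon p 0) * δ x := by
  have key : ∀ i, ((Finset.univ.lcm p : ℕ) : ℤ) * φ (xgen p i)
      = (((Finset.univ.lcm p) / p i : ℕ) : ℤ) * φ (canon p 0) := by
    intro i
    have h1 : φ (canon p 0) = (p i : ℤ) * φ (xgen p i) := by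
      rw [← canon_eq p i, canon, map_zsmul, zsmul_eq_mul, Int.cast_id]
    rw [h1, ← mul_assoc, hw p hp i]
  have hx := decomp_eq p hp x
  have hφ : φ x = ∑ i, lfun p hp x i * φ (xgen p i) + mfun p hp x * φ (canon p 0) := by
    conv_lhs => rw [hx]
    rw [map_add, map_sum, map_zsmul, zsmul_eq_mul, Int.cast_id]
    congr 1
    exact Finset.sum_congr rfl fun i _ => by rw [map_zsmul, zsmul_eq_mul, Int.cast_id]
  rw [hφ, delta_decomp p hp δ hδ x, mul_add, Finset.mul_sum, mul_add, Finset.mul_sum]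
  congr 1
  · refine Finset.sum_congr rfl fun i _ => ?_
    rw [show ((Finset.univ.lcm p : ℕ) : ℤ) * (lfun p hp x i * φ (xgen p i))
        = lfun p hp x i * (((Finset.univ.lcm p : ℕ) : ℤ) * φ (xgen p i)) by ring, key i]
    ring
  · ring

end Choice

end SA

open SA in
lemma count_val {n : ℕ} [NeZero n] (lam : ℤ) (h0 : 0 ≤ lam) (h1 : lam < n) :
    (((Finset.univ.filter fun a : ZMod n => (n:ℤ) ≤ ((a.val:ℕ):ℤ) + lam).card : ℕ) : ℤ) = lam := by
  have hcard : (Finset.univ.filter fun a : ZMod n => (n:ℤ) ≤ ((a.val:ℕ):ℤ) + lam).card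
      = (Finset.Ico (n - lam.toNat) n).card := by
    refine Finset.card_bij (fun a _ => a.val) ?_ ?_ ?_
    · intro a ha
      rw [Finset.mem_filter] at ha
      show a.val ∈ Finset.Ico (n - lam.toNat) n
      rw [Finset.mem_Ico]
      have h2 := ZMod.val_lt a
      have h3 := ha.2
      omega
    · intro a1 h1' a2 h2' hv
      exact ZMod.val_injective n hv
    · intro b hb
      rw [Finset.mem_Ico] at hb
      refine ⟨(b : ZMod n), ?_, ZMod.val_cast_of_lt hb.2⟩
      rw [Finset.mem_filter]
      refine ⟨Finset.mem_univ _, ?_⟩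
      rw [ZMod.val_cast_of_lt hb.2]
      omega
  rw [hcard, Nat.card_Ico]
  omega

lemma sign_iff : ∀ A B P' Q' : ℤ, 1 ≤ P' → 1 ≤ Q' → P' * B = Q' * A →
    ((A < 0 ↔ B < 0) ∧ (A = 0 ↔ B = 0) ∧ (0 < A ↔ 0 < B)) := by
  intro A B P' Q' h1 h2 h3
  have hneg : A < 0 → B < 0 := by intro h; nlinarith
  have hzero : A = 0 → B = 0 := by
    intro h
    rw [h, mul_zero] at h3
    rcases mul_eq_zero.mp h3 with h' | h'
    · omega
    · exact h'
  have hpos : 0 < A → 0 < B := by intro h; nlinarith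
  refine ⟨⟨hneg, fun hB => ?_⟩, ⟨hzero, fun hB => ?_⟩, ⟨hpos, fun hB => ?_⟩⟩
  · rcases lt_trichotomy A 0 with h | h | h
    · exact h
    · exact absurd (hzero h) (by omega)
    · exact absurd (hpos h) (by omega)
  · rcases lt_trichotomy A 0 with h | h | h
    · exact absurd (hneg h) (by omega)
    · exact h
    · exact absurd (hpos h) (by omega)
  · rcases lt_trichotomy A 0 with h | h | h
    · exact absurd (hneg h) (by omega)
    · exact absurd (hzero h) (by omega)
    · exact h

set_option maxHeartbeats 2000000 in
theorem stmt14 {t s : ℕ} (p : Fin (t+1) → ℕ) (q : Fin (s+1) → ℕ)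
    (hp : ∀ i, 2 ≤ p i) (hq : ∀ j, 2 ≤ q j)
    (multp : StringGroup p → ℕ) (multq : StringGroup q → ℕ)
    (hmultp : ∀ (l : Fin (t+1) → ℤ) (m : ℤ), (∀ i, 0 ≤ l i ∧ l i < (p i : ℤ)) →
      multp (∑ i, l i • xgen p i + m • canon p 0) = (m + 1).toNat)
    (hmultq : ∀ (l : Fin (s+1) → ℤ) (m : ℤ), (∀ j, 0 ≤ l j ∧ l j < (q j : ℤ)) →
      multq (∑ j, l j • xgen q j + m • canon q 0) = (m + 1).toNat)
    (π : StringGroup p →+ StringGroup q)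
    (hadm : Admissible p q multp multq π)
    (δp : StringGroup p →+ ℤ)
    (hδp : ∀ i, δp (xgen p i) = ((Finset.univ.lcm p) / p i : ℕ))
    (δq : StringGroup q →+ ℤ)
    (hδq : ∀ j, δq (xgen q j) = ((Finset.univ.lcm q) / q j : ℕ)) :
    (δp ((((t : ℕ) + 1 : ℤ) - 2) • canon p 0 - ∑ i, xgen p i) < 0 ↔
      δq ((((s : ℕ) + 1 : ℤ) - 2) • canon q 0 - ∑ j, xgen q j) < 0) ∧
    (δp ((((t : ℕ) + 1 : ℤ) - 2) • canon p 0 - ∑ i, xgen p i) = 0 ↔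
      δq ((((s : ℕ) + 1 : ℤ) - 2) • canon q 0 - ∑ j, xgen q j) = 0) ∧
    (0 < δp ((((t : ℕ) + 1 : ℤ) - 2) • canon p 0 - ∑ i, xgen p i) ↔
      0 < δq ((((s : ℕ) + 1 : ℤ) - 2) • canon q 0 - ∑ j, xgen q j)) := by
  classical
  obtain ⟨heff, hcount⟩ := hadm
  haveI : ∀ i, NeZero (p i) := fun i => ⟨by have := hp i; omega⟩
  haveI : ∀ j, NeZero (q j) := fun j => ⟨by have := hq j; omega⟩
  have hPpos : (1:ℤ) ≤ ((Finset.univ.lcm p : ℕ) : ℤ) := SA.hP1 p hp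
  have hQpos : (1:ℤ) ≤ ((Finset.univ.lcm q : ℕ) : ℤ) := SA.hP1 q hq
  -- Step 1 : mult in terms of normal form
  have multp_eq : ∀ x, multp x = (SA.mfun p hp x + 1).toNat := by
    intro x
    conv_lhs => rw [SA.decomp_eq p hp x]
    exact hmultp _ _ (SA.lfun_bounds p hp x)
  have multq_eq : ∀ z, multq z = (SA.mfun q hq z + 1).toNat := by
    intro z
    conv_lhs => rw [SA.decomp_eq q hq z]
    exact hmultq _ _ (SA.lfun_bounds q hq z)
  have hmultp0 : multp 0 = 1 := by
    rw [multp_eq 0, (SA.lfun_mfun_zero p hp δp hδp).2]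
    rfl
  have hmultq0 : multq 0 = 1 := by
    rw [multq_eq 0, (SA.lfun_mfun_zero q hq δq hδq).2]
    rfl
  -- Step 2 : multiplicity vanishes on nonzero kernel elements
  have hfib0 : ∑ᶠ x ∈ π ⁻¹' {(0 : StringGroup q)}, multp x = 1 := by
    rw [hcount 0 ⟨0, map_zero π⟩, hmultq0]
  have hsupfin : ((π ⁻¹' {(0: StringGroup q)}) ∩ Function.support multp).Finite := by
    by_contra hinf
    rw [finsum_mem_eq_zero_of_infinite hinf] at hfib0
    omega
  have hKmult : ∀ x : StringGroup p, π x = 0 → x ≠ 0 → multp x = 0 := by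
    intro x hx hx0
    by_contra hne
    have hsum := finsum_mem_eq_sum multp hsupfin
    rw [hsum] at hfib0
    have hsub : ({0, x} : Finset (StringGroup p)) ⊆ hsupfin.toFinset := by
      intro y hy
      rw [Finset.mem_insert, Finset.mem_singleton] at hy
      rw [Set.Finite.mem_toFinset]
      rcases hy with rfl | rfl
      · exact ⟨by simp [Set.mem_preimage, map_zero], by simp [Function.mem_support, hmultp0]⟩
      · exact ⟨by simp [Set.mem_preimage, hx], hne⟩
    have hle := Finset.sum_le_sum_of_subset (f := multp) hsub
    rw [Finset.sum_pair (Ne.symm hx0)] at hle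
    have hpos : 1 ≤ multp x := Nat.pos_of_ne_zero hne
    omega
  -- Step 3 : kernel is contained in the kernel of the degree map
  have hdegK : ∀ x : StringGroup p, π x = 0 → δp x = 0 := by
    have key : ∀ x : StringGroup p, π x = 0 → δp x ≤ 0 := by
      intro x hx
      by_contra hpos
      push_neg at hpos
      have hBnn : (0:ℤ) ≤ ∑ i, ((p i:ℤ) - 1) * ((Finset.univ.lcm p / p i : ℕ) : ℤ) :=
        Finset.sum_nonneg fun i _ => mul_nonneg (by have := hp i; push_cast; omega) (by positivity)
      have hbound : ∀ y : StringGroup p,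
          δp y ≤ (∑ i, ((p i:ℤ) - 1) * ((Finset.univ.lcm p / p i : ℕ) : ℤ))
            + ((Finset.univ.lcm p : ℕ):ℤ) * SA.mfun p hp y := by
        intro y
        rw [SA.delta_decomp p hp δp hδp y]
        have hsle : ∑ i, SA.lfun p hp y i * ((Finset.univ.lcm p / p i : ℕ) : ℤ)
            ≤ ∑ i, ((p i:ℤ) - 1) * ((Finset.univ.lcm p / p i : ℕ) : ℤ) := by
          refine Finset.sum_le_sum fun i _ => ?_
          have hb := SA.lfun_bounds p hp y i
          have hw0 : (0:ℤ) ≤ ((Finset.univ.lcm p / p i : ℕ):ℤ) := by positivity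
          have : SA.lfun p hp y i ≤ (p i:ℤ) - 1 := by omega
          exact mul_le_mul_of_nonneg_right this hw0
        have : SA.mfun p hp y * ((Finset.univ.lcm p : ℕ):ℤ)
            = ((Finset.univ.lcm p : ℕ):ℤ) * SA.mfun p hp y := mul_comm _ _
        omega
      have hstep : ∀ N : ℕ, 1 ≤ N →
          (N:ℤ) * δp x ≤ ∑ i, ((p i:ℤ) - 1) * ((Finset.univ.lcm p / p i : ℕ) : ℤ) := by
        intro N hN
        have hπ : π ((N:ℤ) • x) = 0 := by rw [map_zsmul, hx, smul_zero]
        have hδN : δp ((N:ℤ) • x) = (N:ℤ) * δp x := by rw [map_zsmul, smul_eq_mul]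
        have hne : ((N:ℤ) • x) ≠ 0 := by
          intro h0
          rw [h0, map_zero] at hδN
          have : (1:ℤ) ≤ (N:ℤ) := by exact_mod_cast hN
          nlinarith
        have hm0 : multp ((N:ℤ) • x) = 0 := hKmult _ hπ hne
        rw [multp_eq] at hm0
        have hm1 : SA.mfun p hp ((N:ℤ) • x) ≤ -1 := by omega
        have hb := hbound ((N:ℤ) • x)
        rw [hδN] at hb
        nlinarith
      have hfin := hstep ((∑ i, ((p i:ℤ) - 1) * ((Finset.univ.lcm p / p i : ℕ) : ℤ)).toNat + 1)
        (by omega)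
      have hc : (((∑ i, ((p i:ℤ) - 1) * ((Finset.univ.lcm p / p i : ℕ) : ℤ)).toNat + 1 : ℕ) : ℤ)
          = (∑ i, ((p i:ℤ) - 1) * ((Finset.univ.lcm p / p i : ℕ) : ℤ)) + 1 := by
        rw [Nat.cast_add, Nat.cast_one, Int.toNat_of_nonneg hBnn]
      rw [hc] at hfin
      nlinarith
    intro x hx
    have h1 := key x hx
    have h2 := key (-x) (by rw [map_neg, hx, neg_zero])
    rw [map_neg] at h2
    omega
  -- Step 4 : the kernel is finite
  have hKfin : (π ⁻¹' {(0:StringGroup q)}).Finite := by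
    have himg : ((fun x => (fun j => SA.rho p j x)) '' (π ⁻¹' {(0:StringGroup q)})).Finite :=
      Set.toFinite _
    refine Set.Finite.of_finite_image himg ?_
    intro x hx y hy hxy
    have hx' : π x = 0 := hx
    have hy' : π y = 0 := hy
    have hl : ∀ j, SA.lfun p hp x j = SA.lfun p hp y j := by
      intro j
      rw [SA.lfun_eq_val p hp x j, SA.lfun_eq_val p hp y j]
      have hj := congrFun hxy j
      simp only at hj
      rw [hj]
    have hm : SA.mfun p hp x = SA.mfun p hp y := by
      have e1 := SA.delta_decomp p hp δp hδp x
      have e2 := SA.delta_decomp p hp δp hδp y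
      rw [hdegK x hx'] at e1
      rw [hdegK y hy'] at e2
      have hsums : ∑ i, SA.lfun p hp x i * ((Finset.univ.lcm p / p i : ℕ) : ℤ)
          = ∑ i, SA.lfun p hp y i * ((Finset.univ.lcm p / p i : ℕ) : ℤ) :=
        Finset.sum_congr rfl fun i _ => by rw [hl i]
      have : SA.mfun p hp x * ((Finset.univ.lcm p:ℕ):ℤ)
          = SA.mfun p hp y * ((Finset.univ.lcm p:ℕ):ℤ) := by omega
      have hPne : ((Finset.univ.lcm p:ℕ):ℤ) ≠ 0 := by omega
      exact mul_right_cancel₀ hPne this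
    calc x = ∑ i, SA.lfun p hp x i • xgen p i + SA.mfun p hp x • canon p 0 :=
          SA.decomp_eq p hp x
      _ = ∑ i, SA.lfun p hp y i • xgen p i + SA.mfun p hp y • canon p 0 := by
          rw [hm]
          congr 1
          exact Finset.sum_congr rfl fun i _ => by rw [hl i]
      _ = y := (SA.decomp_eq p hp y).symm
  -- the kernel as a finset
  set Kfin : Finset (StringGroup p) := hKfin.toFinset with hKfindef
  have hKmem : ∀ k, k ∈ Kfin ↔ π k = 0 := by
    intro k
    rw [hKfindef, Set.Finite.mem_toFinset]
    exact Iff.rfl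
  have h0K : (0:StringGroup p) ∈ Kfin := (hKmem 0).mpr (map_zero π)
  have hnpos : 1 ≤ Kfin.card := Finset.card_pos.mpr ⟨0, h0K⟩
  -- Step 5 : master counting identity
  have master : ∀ x : StringGroup p, ∑ k ∈ Kfin, multp (x + k) = multq (π x) := by
    intro x
    have hfib : π ⁻¹' {π x} = ↑(Kfin.image (fun k => x + k)) := by
      ext y
      simp only [Set.mem_preimage, Set.mem_singleton_iff, Finset.coe_image, Set.mem_image,
        Finset.mem_coe]
      constructor
      · intro h
        exact ⟨y - x, (hKmem _).mpr (by rw [map_sub, h, sub_self]), by abel⟩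
      · rintro ⟨k, hk, rfl⟩
        rw [map_add, (hKmem k).mp hk, add_zero]
    have hc := hcount (π x) ⟨x, rfl⟩
    rw [hfib, finsum_mem_coe_finset,
      Finset.sum_image (fun a _ b _ h => by exact add_left_cancel h)] at hc
    exact hc
  -- Step 6 : linearization
  have hrho_a1 : ∀ j, SA.rho q j (((Finset.univ.lcm q : ℕ):ℤ) • π (canon p 0)) = 0 := by
    intro j
    rw [map_zsmul, zsmul_eq_mul]
    have hz : (((Finset.univ.lcm q : ℕ):ℤ) : ZMod (q j)) = 0 := by
      have h1 : ((Finset.univ.lcm q : ℕ) : ZMod (q j)) = 0 :=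
        (ZMod.natCast_eq_zero_iff _ _).mpr (Finset.dvd_lcm (Finset.mem_univ j))
      exact_mod_cast h1
    rw [hz, zero_mul]
  have hrho_Ma1 : ∀ (M : ℤ) (j : Fin (s+1)),
      SA.rho q j (M • (((Finset.univ.lcm q : ℕ):ℤ) • π (canon p 0))) = 0 := by
    intro M j
    rw [map_zsmul, hrho_a1 j, smul_zero]
  have hadd0q : ∀ (z a : StringGroup q), (∀ j, SA.rho q j a = 0) →
      SA.mfun q hq (z + a) = SA.mfun q hq z + SA.mfun q hq a := by
    intro z a ha
    have hcarry := SA.lfun_mfun_add q hq δq hδq z a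
    have hzero : (Finset.univ.filter fun j => (q j:ℤ) ≤ SA.lfun q hq z j + SA.lfun q hq a j)
        = ∅ := by
      rw [Finset.filter_eq_empty_iff]
      intro j _
      have h1 := SA.lfun_bounds q hq z j
      have h2 : SA.lfun q hq a j = 0 := (SA.eq_smul_of_rho_zero q hq δq hδq ha).1 j
      omega
    rw [hzero] at hcarry
    simpa using hcarry
  have key6 : ∀ x : StringGroup p, ∀ M : ℤ,
      (1 + (∑ k ∈ Kfin, ((SA.mfun p hp (x + k)).natAbs : ℤ)) ≤ M) →
      SA.mfun q hq (π x)
        + M * SA.mfun q hq (((Finset.univ.lcm q : ℕ):ℤ) • π (canon p 0)) + 1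
      = (∑ k ∈ Kfin, (SA.mfun p hp (x + k) + 1))
        + (Kfin.card : ℤ) * (((Finset.univ.lcm q : ℕ):ℤ) * M) := by
    intro x M hM
    have hnatsum : (0:ℤ) ≤ ∑ k ∈ Kfin, ((SA.mfun p hp (x + k)).natAbs : ℤ) := by positivity
    have hMnn : (0:ℤ) ≤ M := by omega
    have hMA : M ≤ ((Finset.univ.lcm q : ℕ):ℤ) * M := le_mul_of_one_le_left hMnn hQpos
    have hterm : ∀ k ∈ Kfin, ((SA.mfun p hp (x+k)).natAbs : ℤ)
        ≤ ∑ k ∈ Kfin, ((SA.mfun p hp (x + k)).natAbs : ℤ) :=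
      fun k hk => Finset.single_le_sum (f := fun k => (((SA.mfun p hp (x+k)).natAbs : ℕ) : ℤ))
        (fun k _ => by positivity) hk
    have hmas := master (x + (((Finset.univ.lcm q:ℕ):ℤ) * M) • canon p 0)
    -- rewrite the left side
    have hL : ∀ k ∈ Kfin, multp ((x + (((Finset.univ.lcm q:ℕ):ℤ) * M) • canon p 0) + k)
        = (SA.mfun p hp (x + k) + ((Finset.univ.lcm q:ℕ):ℤ) * M + 1).toNat := by
      intro k _
      have hre : (x + (((Finset.univ.lcm q:ℕ):ℤ) * M) • canon p 0) + k
          = (x + k) + (((Finset.univ.lcm q:ℕ):ℤ) * M) • canon p 0 := by abel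
      rw [hre, multp_eq,
        (SA.lfun_mfun_add_smul_canon p hp δp hδp (x+k) (((Finset.univ.lcm q:ℕ):ℤ) * M)).2]
    rw [Finset.sum_congr rfl hL] at hmas
    -- rewrite the right side
    have hR : π (x + (((Finset.univ.lcm q:ℕ):ℤ) * M) • canon p 0)
        = π x + M • (((Finset.univ.lcm q : ℕ):ℤ) • π (canon p 0)) := by
      rw [map_add, map_zsmul, ← mul_zsmul, mul_comm]
    rw [hR, multq_eq, hadd0q _ _ (hrho_Ma1 M),
      SA.mfun_zsmul_of_rho_zero q hq δq hδq hrho_a1 M] at hmas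
    -- cast to ℤ
    have hcast := congrArg (fun n : ℕ => (n : ℤ)) hmas
    simp only [Nat.cast_sum] at hcast
    have hterms : ∀ k ∈ Kfin, ((SA.mfun p hp (x + k) + ((Finset.univ.lcm q:ℕ):ℤ) * M + 1).toNat : ℤ)
        = SA.mfun p hp (x + k) + ((Finset.univ.lcm q:ℕ):ℤ) * M + 1 := by
      intro k hk
      have h1 := hterm k hk
      rw [Int.toNat_of_nonneg (by omega)]
    rw [Finset.sum_congr rfl hterms] at hcast
    have hsum_split : ∑ k ∈ Kfin, (SA.mfun p hp (x + k) + ((Finset.univ.lcm q:ℕ):ℤ) * M + 1)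
        = (∑ k ∈ Kfin, (SA.mfun p hp (x + k) + 1))
          + (Kfin.card : ℤ) * (((Finset.univ.lcm q : ℕ):ℤ) * M) := by
      have h1 : ∀ k ∈ Kfin, SA.mfun p hp (x + k) + ((Finset.univ.lcm q:ℕ):ℤ) * M + 1
          = (SA.mfun p hp (x + k) + 1) + ((Finset.univ.lcm q:ℕ):ℤ) * M := fun k _ => by ring
      rw [Finset.sum_congr rfl h1, Finset.sum_add_distrib, Finset.sum_const, nsmul_eq_mul]
    rw [hsum_split] at hcast
    -- now hcast : ((mfun (πx) + M * e + 1).toNat : ℤ) = S + n * (Qn * M)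
    have hRHS1 : (1:ℤ) ≤ (∑ k ∈ Kfin, (SA.mfun p hp (x + k) + 1))
        + (Kfin.card : ℤ) * (((Finset.univ.lcm q : ℕ):ℤ) * M) := by
      have hS : -(∑ k ∈ Kfin, ((SA.mfun p hp (x + k)).natAbs : ℤ))
          ≤ ∑ k ∈ Kfin, (SA.mfun p hp (x + k) + 1) := by
        have hh := Finset.sum_le_sum (s := Kfin)
          (f := fun k => -(((SA.mfun p hp (x+k)).natAbs : ℕ) : ℤ))
          (g := fun k => SA.mfun p hp (x+k) + 1) (fun k _ => by
            show -(((SA.mfun p hp (x+k)).natAbs : ℕ) : ℤ) ≤ SA.mfun p hp (x+k) + 1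
            omega)
        simpa using hh
      have hn' : (1:ℤ) ≤ (Kfin.card : ℤ) := by exact_mod_cast hnpos
      have : ((Finset.univ.lcm q : ℕ):ℤ) * M ≤ (Kfin.card : ℤ) * (((Finset.univ.lcm q : ℕ):ℤ) * M) := by
        refine le_mul_of_one_le_left ?_ hn'
        positivity
      omega
    omega
  -- consequences of linearization
  have he : SA.mfun q hq (((Finset.univ.lcm q : ℕ):ℤ) • π (canon p 0))
      = (Kfin.card : ℤ) * ((Finset.univ.lcm q : ℕ):ℤ) := by
    have h1 := key6 0 (1 + (∑ k ∈ Kfin, ((SA.mfun p hp (0 + k)).natAbs : ℤ))) (le_refl _)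
    have h2 := key6 0 (1 + (∑ k ∈ Kfin, ((SA.mfun p hp (0 + k)).natAbs : ℤ)) + 1) (by omega)
    linear_combination h2 - h1
  have hIII : ∀ x : StringGroup p,
      SA.mfun q hq (π x) + 1 = ∑ k ∈ Kfin, (SA.mfun p hp (x + k) + 1) := by
    intro x
    have h1 := key6 x (1 + (∑ k ∈ Kfin, ((SA.mfun p hp (x + k)).natAbs : ℤ))) (le_refl _)
    rw [he] at h1
    linear_combination h1
  have hDc : δq (π (canon p 0)) = (Kfin.card : ℤ) * ((Finset.univ.lcm q : ℕ):ℤ) := by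
    have hd1 := SA.delta_decomp q hq δq hδq (((Finset.univ.lcm q : ℕ):ℤ) • π (canon p 0))
    have hl0 := (SA.eq_smul_of_rho_zero q hq δq hδq hrho_a1).1
    have hz : ∑ j, SA.lfun q hq (((Finset.univ.lcm q : ℕ):ℤ) • π (canon p 0)) j
        * ((Finset.univ.lcm q / q j : ℕ):ℤ) = 0 :=
      Finset.sum_eq_zero fun j _ => by rw [hl0 j, zero_mul]
    have hd2 : δq (((Finset.univ.lcm q : ℕ):ℤ) • π (canon p 0))
        = ((Finset.univ.lcm q : ℕ):ℤ) * δq (π (canon p 0)) := by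
      rw [map_zsmul, smul_eq_mul]
    rw [hz, zero_add, he, hd2] at hd1
    have hQne : ((Finset.univ.lcm q : ℕ):ℤ) ≠ 0 := by omega
    apply mul_left_cancel₀ hQne
    rw [hd1]
    ring
  -- Step 7 : duality
  set Op : StringGroup p := ∑ i, ((p i : ℤ) - 1) • xgen p i + (-2 : ℤ) • canon p 0 with hOp
  set Oq : StringGroup q := ∑ j, ((q j : ℤ) - 1) • xgen q j + (-2 : ℤ) • canon q 0 with hOq
  have hKneg : ∀ k ∈ Kfin, -k ∈ Kfin := by
    intro k hk
    rw [hKmem]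
    rw [map_neg, (hKmem k).mp hk, neg_zero]
  have hIV : ∀ x : StringGroup p,
      SA.mfun q hq (π Op - π x) + 1 = -(SA.mfun q hq (π x) + 1) := by
    intro x
    have h1 := hIII (Op - x)
    have hterm : ∀ k ∈ Kfin, SA.mfun p hp ((Op - x) + k) + 1
        = -(SA.mfun p hp (x + -k) + 1) := by
      intro k hk
      have hre : (Op - x) + k = Op - (x + -k) := by abel
      rw [hre, hOp, SA.mfun_omega_sub p hp δp hδp (x + -k)]
      ring
    rw [Finset.sum_congr rfl hterm] at h1
    have hre2 : ∑ k ∈ Kfin, -(SA.mfun p hp (x + -k) + 1)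
        = -∑ k ∈ Kfin, (SA.mfun p hp (x + -k) + 1) := by
      rw [← Finset.sum_neg_distrib]
    have hre3 : ∑ k ∈ Kfin, (SA.mfun p hp (x + -k) + 1)
        = ∑ k ∈ Kfin, (SA.mfun p hp (x + k) + 1) := by
      refine Finset.sum_nbij' (i := fun k => -k) (j := fun k => -k) ?_ ?_ ?_ ?_ ?_
      · exact fun a ha => hKneg a ha
      · exact fun a ha => hKneg a ha
      · intro a _; simp
      · intro a _; simp
      · intro a _; simp
    rw [hre2, hre3, ← hIII x] at h1
    have hps : π (Op - x) = π Op - π x := map_sub π _ _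
    rw [hps] at h1
    linarith
  have hstep7 : ∀ x : StringGroup p,
      SA.mfun q hq ((Oq - π x) + (π Op - Oq)) = SA.mfun q hq (Oq - π x) := by
    intro x
    have hre : (Oq - π x) + (π Op - Oq) = π Op - π x := by abel
    rw [hre]
    have h1 := hIV x
    have h2 : SA.mfun q hq (Oq - π x) = -2 - SA.mfun q hq (π x) := by
      rw [hOq]
      exact SA.mfun_omega_sub q hq δq hδq (π x)
    omega
  have hcarryconst : ∀ x : StringGroup p,
      (((Finset.univ.filter fun j => (q j:ℤ) ≤ SA.lfun q hq (Oq - π x) j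
          + SA.lfun q hq (π Op - Oq) j).card : ℕ) : ℤ)
        = - SA.mfun q hq (π Op - Oq) := by
    intro x
    have h := SA.lfun_mfun_add q hq δq hδq (Oq - π x) (π Op - Oq)
    rw [hstep7 x] at h
    omega
  -- Step 8 : averaging over residues
  set dd : StringGroup q := π Op - Oq with hdd
  have hlam_bounds := SA.lfun_bounds q hq dd
  set utot : StringGroup q → (∀ j : Fin (s+1), ZMod (q j)) := fun z j => SA.rho q j z with hutot
  set Cfin : Finset (∀ j : Fin (s+1), ZMod (q j)) :=
    Finset.univ.filter (fun u => ∃ x : StringGroup p, utot (Oq - π x) = u) with hCfin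
  have hCmem : ∀ u, u ∈ Cfin ↔ ∃ x : StringGroup p, utot (Oq - π x) = u := by
    intro u
    rw [hCfin, Finset.mem_filter]
    simp
  have hCne : (0:ℤ) < (Cfin.card : ℤ) := by
    have h1 : utot (Oq - π 0) ∈ Cfin := (hCmem _).mpr ⟨0, rfl⟩
    have h2 := Finset.card_pos.mpr ⟨_, h1⟩
    exact_mod_cast h2
  have hcnt : ∀ u ∈ Cfin,
      (((Finset.univ.filter fun j => (q j:ℤ) ≤ (((u j).val:ℕ):ℤ) + SA.lfun q hq dd j).card : ℕ) : ℤ)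
        = - SA.mfun q hq dd := by
    intro u hu
    obtain ⟨x, rfl⟩ := (hCmem u).mp hu
    have hfeq : (Finset.univ.filter fun j =>
          (q j:ℤ) ≤ (((utot (Oq - π x) j).val:ℕ):ℤ) + SA.lfun q hq dd j)
        = (Finset.univ.filter fun j =>
          (q j:ℤ) ≤ SA.lfun q hq (Oq - π x) j + SA.lfun q hq dd j) := by
      refine Finset.filter_congr fun j _ => ?_
      rw [SA.lfun_eq_val q hq (Oq - π x) j]
    rw [hfeq, hdd]
    exact hcarryconst x
  -- per-coordinate fiber counting
  have hq_count : ∀ j : Fin (s+1),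
      ((q j : ℕ) : ℤ) * ((Cfin.filter (fun u => (q j:ℤ) ≤ (((u j).val:ℕ):ℤ) + SA.lfun q hq dd j)).card : ℤ)
        = (Cfin.card : ℤ) * SA.lfun q hq dd j := by
    intro j
    have htrans : ∀ b : ZMod (q j),
        (Cfin.filter (fun u => (q j:ℤ) ≤ (((u j + b).val:ℕ):ℤ) + SA.lfun q hq dd j)).card
          = (Cfin.filter (fun u => (q j:ℤ) ≤ (((u j).val:ℕ):ℤ) + SA.lfun q hq dd j)).card := by
      intro b
      obtain ⟨g, hgmem, hgval⟩ := heff j (SA.rho q j) (fun k => SA.rho_xgen q j k) b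
      obtain ⟨x₀, rfl⟩ := hgmem
      refine Finset.card_bij' (fun u _ => u + utot (π x₀)) (fun v _ => v + utot (π (-x₀)))
        ?_ ?_ ?_ ?_
      · intro u hu
        rw [Finset.mem_filter] at hu
        obtain ⟨huC, hucond⟩ := hu
        obtain ⟨x, hx⟩ := (hCmem u).mp huC
        rw [Finset.mem_filter]
        constructor
        · refine (hCmem _).mpr ⟨x - x₀, ?_⟩
          have hre : Oq - π (x - x₀) = (Oq - π x) + π x₀ := by rw [map_sub]; abel
          funext jj
          show SA.rho q jj (Oq - π (x - x₀)) = u jj + SA.rho q jj (π x₀)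
          have hxj : SA.rho q jj (Oq - π x) = u jj := congrFun hx jj
          rw [hre, map_add, hxj]
        · show (q j:ℤ) ≤ ((((u + utot (π x₀)) j).val:ℕ):ℤ) + SA.lfun q hq dd j
          have hval : (u + utot (π x₀)) j = u j + b := by
            show u j + SA.rho q j (π x₀) = u j + b
            rw [hgval]
          rw [hval]
          exact hucond
      · intro v hv
        rw [Finset.mem_filter] at hv
        obtain ⟨hvC, hvcond⟩ := hv
        obtain ⟨x, hx⟩ := (hCmem v).mp hvC
        rw [Finset.mem_filter]
        constructor
        · refine (hCmem _).mpr ⟨x + x₀, ?_⟩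
          have hre : Oq - π (x + x₀) = (Oq - π x) + π (-x₀) := by
            rw [map_add, map_neg]
            abel
          funext jj
          show SA.rho q jj (Oq - π (x + x₀)) = v jj + SA.rho q jj (π (-x₀))
          have hxj : SA.rho q jj (Oq - π x) = v jj := congrFun hx jj
          rw [hre, map_add, hxj]
        · show (q j:ℤ) ≤ ((((v + utot (π (-x₀))) j + b).val:ℕ):ℤ) + SA.lfun q hq dd j
          have hval : (v + utot (π (-x₀))) j + b = v j := by
            show v j + SA.rho q j (π (-x₀)) + b = v j
            rw [map_neg, map_neg, hgval]
            abel
          rw [hval]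
          exact hvcond
      · intro u _
        funext jj
        show u jj + SA.rho q jj (π x₀) + SA.rho q jj (π (-x₀)) = u jj
        rw [map_neg, map_neg]
        abel
      · intro v _
        funext jj
        show v jj + SA.rho q jj (π (-x₀)) + SA.rho q jj (π x₀) = v jj
        rw [map_neg, map_neg]
        abel
    have hA : (((Finset.univ.filter fun a : ZMod (q j) =>
          (q j:ℤ) ≤ ((a.val:ℕ):ℤ) + SA.lfun q hq dd j).card : ℕ):ℤ) = SA.lfun q hq dd j :=
      count_val _ (hlam_bounds j).1 (hlam_bounds j).2
    have hinner : ∀ u : (∀ jj : Fin (s+1), ZMod (q jj)),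
        (Finset.univ.filter (fun b : ZMod (q j) =>
            (q j:ℤ) ≤ (((u j + b).val:ℕ):ℤ) + SA.lfun q hq dd j)).card
          = (Finset.univ.filter fun a : ZMod (q j) =>
            (q j:ℤ) ≤ ((a.val:ℕ):ℤ) + SA.lfun q hq dd j).card := by
      intro u
      refine Finset.card_bij' (fun b _ => u j + b) (fun a _ => a - u j) ?_ ?_ ?_ ?_
      · intro b hb
        rw [Finset.mem_filter] at hb
        rw [Finset.mem_filter]
        exact ⟨Finset.mem_univ _, hb.2⟩
      · intro a ha
        rw [Finset.mem_filter] at ha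
        rw [Finset.mem_filter]
        refine ⟨Finset.mem_univ _, ?_⟩
        show (q j:ℤ) ≤ (((u j + (a - u j)).val:ℕ):ℤ) + SA.lfun q hq dd j
        rw [add_sub_cancel]
        exact ha.2
      · intro b _
        show u j + b - u j = b
        rw [add_sub_cancel_left]
      · intro a _
        show u j + (a - u j) = a
        rw [add_sub_cancel]
    have hswap : ∑ u ∈ Cfin, (Finset.univ.filter (fun b : ZMod (q j) =>
          (q j:ℤ) ≤ (((u j + b).val:ℕ):ℤ) + SA.lfun q hq dd j)).card
        = ∑ b : ZMod (q j), ((Cfin.filter (fun u => (q j:ℤ) ≤ (((u j + b).val:ℕ):ℤ) + SA.lfun q hq dd j)).card) := by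
      simp only [Finset.card_filter]
      exact Finset.sum_comm
    have h1 : ∑ b : ZMod (q j), ((Cfin.filter (fun u =>
          (q j:ℤ) ≤ (((u j + b).val:ℕ):ℤ) + SA.lfun q hq dd j)).card)
        = (q j) * (Cfin.filter (fun u =>
          (q j:ℤ) ≤ (((u j).val:ℕ):ℤ) + SA.lfun q hq dd j)).card := by
      rw [Finset.sum_congr rfl (fun b _ => htrans b), Finset.sum_const, Finset.card_univ,
        ZMod.card, smul_eq_mul]
    have h2 : ∑ u ∈ Cfin, (Finset.univ.filter (fun b : ZMod (q j) =>
          (q j:ℤ) ≤ (((u j + b).val:ℕ):ℤ) + SA.lfun q hq dd j)).card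
        = Cfin.card * (Finset.univ.filter fun a : ZMod (q j) =>
          (q j:ℤ) ≤ ((a.val:ℕ):ℤ) + SA.lfun q hq dd j).card := by
      rw [Finset.sum_congr rfl (fun u _ => hinner u), Finset.sum_const, smul_eq_mul]
    have hnat : (q j) * (Cfin.filter (fun u =>
          (q j:ℤ) ≤ (((u j).val:ℕ):ℤ) + SA.lfun q hq dd j)).card
        = Cfin.card * (Finset.univ.filter fun a : ZMod (q j) =>
          (q j:ℤ) ≤ ((a.val:ℕ):ℤ) + SA.lfun q hq dd j).card := by
      rw [← h1, ← hswap, h2]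
    calc ((q j : ℕ) : ℤ) * ((Cfin.filter (fun u =>
            (q j:ℤ) ≤ (((u j).val:ℕ):ℤ) + SA.lfun q hq dd j)).card : ℤ)
        = (((q j) * (Cfin.filter (fun u =>
            (q j:ℤ) ≤ (((u j).val:ℕ):ℤ) + SA.lfun q hq dd j)).card : ℕ) : ℤ) := by push_cast; ring
      _ = ((Cfin.card * (Finset.univ.filter fun a : ZMod (q j) =>
            (q j:ℤ) ≤ ((a.val:ℕ):ℤ) + SA.lfun q hq dd j).card : ℕ) : ℤ) := by rw [hnat]
      _ = (Cfin.card : ℤ) * (((Finset.univ.filter fun a : ZMod (q j) =>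
            (q j:ℤ) ≤ ((a.val:ℕ):ℤ) + SA.lfun q hq dd j).card : ℕ) : ℤ) := by push_cast; ring
      _ = (Cfin.card : ℤ) * SA.lfun q hq dd j := by rw [hA]
  -- total count
  have htotal : (Cfin.card : ℤ) * (- SA.mfun q hq dd)
      = ∑ j, ((Cfin.filter (fun u => (q j:ℤ) ≤ (((u j).val:ℕ):ℤ) + SA.lfun q hq dd j)).card : ℤ) := by
    have h1 : ∑ u ∈ Cfin, (((Finset.univ.filter fun j =>
          (q j:ℤ) ≤ (((u j).val:ℕ):ℤ) + SA.lfun q hq dd j).card : ℕ) : ℤ)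
        = (Cfin.card : ℤ) * (- SA.mfun q hq dd) := by
      rw [Finset.sum_congr rfl hcnt, Finset.sum_const, nsmul_eq_mul]
    have h2 : ∑ u ∈ Cfin, (((Finset.univ.filter fun j =>
          (q j:ℤ) ≤ (((u j).val:ℕ):ℤ) + SA.lfun q hq dd j).card : ℕ) : ℤ)
        = ∑ j, ((Cfin.filter (fun u => (q j:ℤ) ≤ (((u j).val:ℕ):ℤ) + SA.lfun q hq dd j)).card : ℤ) := by
      simp only [Finset.card_filter]
      push_cast
      rw [Finset.sum_comm]
    rw [← h1, h2]
  -- δq kills dd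
  have hdelta_dd : δq dd = 0 := by
    have hdec := SA.delta_decomp q hq δq hδq dd
    have hsum1 : ((Finset.univ.lcm q:ℕ):ℤ) * ((Cfin.card:ℤ) * (- SA.mfun q hq dd))
        = (Cfin.card:ℤ) * ∑ j, ((Finset.univ.lcm q / q j : ℕ):ℤ) * SA.lfun q hq dd j := by
      rw [htotal, Finset.mul_sum, Finset.mul_sum]
      refine Finset.sum_congr rfl fun j _ => ?_
      have h1 := hq_count j
      have h2 := SA.hw q hq j
      rw [← h2, mul_assoc, h1]
      ring
    have hC0 : (Cfin.card:ℤ) ≠ 0 := ne_of_gt hCne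
    have hkey : ((Finset.univ.lcm q:ℕ):ℤ) * (- SA.mfun q hq dd)
        = ∑ j, ((Finset.univ.lcm q / q j : ℕ):ℤ) * SA.lfun q hq dd j := by
      apply mul_left_cancel₀ hC0
      rw [← hsum1]
      ring
    have hcomm : ∑ j, SA.lfun q hq dd j * ((Finset.univ.lcm q / q j : ℕ):ℤ)
        = ∑ j, ((Finset.univ.lcm q / q j : ℕ):ℤ) * SA.lfun q hq dd j :=
      Finset.sum_congr rfl fun j _ => mul_comm _ _
    rw [hdec, hcomm, ← hkey]
    ring
  -- Step 9 : conclusion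
  have hprop := SA.hom_prop p hp δp hδp (δq.comp π) Op
  simp only [AddMonoidHom.comp_apply] at hprop
  rw [hDc] at hprop
  have hwq : δq (π Op) = δq Oq := by
    have hre : π Op = Oq + dd := by rw [hdd]; abel
    rw [hre, map_add, hdelta_dd, add_zero]
  rw [hwq] at hprop
  have hnQ : (1:ℤ) ≤ (Kfin.card:ℤ) * ((Finset.univ.lcm q:ℕ):ℤ) := by
    have h1 : (1:ℤ) ≤ (Kfin.card:ℤ) := by exact_mod_cast hnpos
    nlinarith
  rw [SA.omega_form p, SA.omega_form q, ← hOp, ← hOq]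
  exact sign_iff (δp Op) (δq Oq) _ _ hPpos hnQ hprop
end

section
/- Let n divide gcd(p_1, p_2) and let H = ⟨(p_1/n)x_1 − (p_2/n)x_2⟩ ⊆ L(p). Set q = (p_1/n, p_2/n, p_3,...,p_3, ..., p_t,...,p_t) where each p_i (3 ≤ i ≤ t) is repeated n times. Then the assignments π(x_1) = z_{1_1}, π(x_2) = z_{2_1}, and π(x_i) = Σ_{j=1}^n z_{i_j} for 3 ≤ i ≤ t define a well-defined group homomorphism π: L(p) → L(q) whose kernel equals H. -/
open scoped BigOperators

lemma mem_stringClosure {ι : Type} [Fintype ι] [DecidableEq ι] [Nonempty ι]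
    (p : ι → ℕ) (v : ι → ℤ) :
    v ∈ AddSubgroup.closure (stringRelators p) ↔
      ∃ a : ι → ℤ, (∑ i, a i) = 0 ∧ ∀ k, v k = a k * p k := by
  constructor
  · intro hv
    induction hv using AddSubgroup.closure_induction with
    | mem x hx =>
      obtain ⟨i, j, rfl⟩ := hx
      refine ⟨Pi.single i 1 - Pi.single j 1, by simp, fun k => ?_⟩
      simp only [Pi.sub_apply, Pi.smul_apply, smul_eq_mul, Pi.single_apply]
      by_cases hk : k = i <;> by_cases hk' : k = j <;> simp [hk, hk'] <;>
        split_ifs <;> simp_all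
    | zero => exact ⟨0, by simp, by simp⟩
    | add x y hx hy ihx ihy =>
      obtain ⟨a, ha, hva⟩ := ihx
      obtain ⟨b, hb, hvb⟩ := ihy
      exact ⟨a + b, by simp [Finset.sum_add_distrib, ha, hb], fun k => by
        simp [hva k, hvb k]; ring⟩
    | neg x hx ih =>
      obtain ⟨a, ha, hva⟩ := ih
      exact ⟨-a, by simp [ha], fun k => by simp [hva k]⟩
  · rintro ⟨a, hsum, hv⟩
    obtain ⟨i₀⟩ := ‹Nonempty ι›
    have hvrw : v = ∑ i, a i • (((p i : ℤ) • Pi.single i 1 : ι → ℤ)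
        - (p i₀ : ℤ) • Pi.single i₀ 1) := by
      have h2 : (∑ i, a i • ((p i₀ : ℤ) • Pi.single i₀ 1 : ι → ℤ))
          = (∑ i, a i) • ((p i₀ : ℤ) • Pi.single i₀ 1 : ι → ℤ) := by
        rw [Finset.sum_smul]
      funext k
      rw [show (∑ i, a i • (((p i : ℤ) • Pi.single i 1 : ι → ℤ)
          - (p i₀ : ℤ) • Pi.single i₀ 1)) = (∑ i, a i • ((p i : ℤ) • Pi.single i 1 : ι → ℤ))
          - (∑ i, a i • ((p i₀ : ℤ) • Pi.single i₀ 1 : ι → ℤ)) by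
        rw [← Finset.sum_sub_distrib]; congr 1; funext i; rw [smul_sub]]
      rw [h2, hsum, zero_smul, sub_zero, hv k]
      simp [Finset.sum_apply, Pi.single_apply, mul_ite, Finset.sum_ite_eq']
    rw [hvrw]
    refine AddSubgroup.sum_mem _ (fun i _ => AddSubgroup.zsmul_mem _
      (AddSubgroup.subset_closure ?_) _)
    exact ⟨i, i₀, rfl⟩

def phiHom {t n : ℕ} (hn : 0 < n) : (Fin (t+2) → ℤ) →+ (Fin (t+2) × Fin n → ℤ) where
  toFun := fun v ij => if (ij.1 : ℕ) < 2 then (if ij.2 = ⟨0, hn⟩ then v ij.1 else 0)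
    else v ij.1
  map_zero' := by funext ij; simp
  map_add' := fun a b => by funext ij; simp; split_ifs <;> simp

lemma fin_lt_two {t : ℕ} (i : Fin (t+2)) (h : (i : ℕ) < 2) : i = 0 ∨ i = 1 := by
  have h' : (i : ℕ) = 0 ∨ (i : ℕ) = 1 := by omega
  rcases h' with h' | h'
  · left; exact Fin.ext (by simp [h'])
  · right; exact Fin.ext (by simp [h'])

theorem stmt16 {t n : ℕ} (hn : 0 < n) (p : Fin (t+2) → ℕ) (hp : ∀ i, 2 ≤ p i)
    (hdvd : n ∣ Nat.gcd (p 0) (p 1))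
    (q : Fin (t+2) × Fin n → ℕ)
    (hq : ∀ ij : Fin (t+2) × Fin n,
      q ij = if (ij.1 : ℕ) < 2 then (if ij.2 = ⟨0, hn⟩ then p ij.1 / n else 1) else p ij.1) :
    ∃ π : StringGroup p →+ StringGroup q,
      π (xgen p 0) = xgen q (0, ⟨0, hn⟩) ∧
      π (xgen p 1) = xgen q (1, ⟨0, hn⟩) ∧
      (∀ i : Fin (t+2), 2 ≤ (i : ℕ) → π (xgen p i) = ∑ j : Fin n, xgen q (i, j)) ∧
      π.ker = AddSubgroup.zmultiples ((p 0 / n) • xgen p 0 - (p 1 / n) • xgen p 1) := by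
  haveI : Nonempty (Fin n) := ⟨⟨0, hn⟩⟩
  set j0 : Fin n := ⟨0, hn⟩ with hj0
  have hd0 : n ∣ p 0 := hdvd.trans (Nat.gcd_dvd_left _ _)
  have hd1 : n ∣ p 1 := hdvd.trans (Nat.gcd_dvd_right _ _)
  have hdall : ∀ i : Fin (t+2), (i : ℕ) < 2 → n ∣ p i := by
    intro i hi; rcases fin_lt_two i hi with rfl | rfl <;> assumption
  have hcast : ∀ i : Fin (t+2), (i : ℕ) < 2 → (p i : ℤ) = n * ((p i / n : ℕ) : ℤ) := by
    intro i hi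
    have := (Nat.mul_div_cancel' (hdall i hi)).symm
    exact_mod_cast congrArg (Nat.cast : ℕ → ℤ) this
  -- φ maps the relator subgroup of p into that of q
  have hker : ∀ v ∈ AddSubgroup.closure (stringRelators p),
      phiHom hn v ∈ AddSubgroup.closure (stringRelators q) := by
    intro v hv
    rw [mem_stringClosure p v] at hv
    obtain ⟨a, hsum, hva⟩ := hv
    rw [mem_stringClosure q]
    refine ⟨fun ij => if (ij.1 : ℕ) < 2 then (if ij.2 = j0 then n * a ij.1 else 0)
      else a ij.1, ?_, ?_⟩
    · rw [Fintype.sum_prod_type]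
      have : ∀ i : Fin (t+2),
          (∑ j : Fin n, if (i : ℕ) < 2 then (if j = j0 then n * a i else 0) else a i)
          = (n : ℤ) * a i := by
        intro i
        by_cases hi : (i : ℕ) < 2
        · simp [hi, Finset.sum_ite_eq']
        · simp [hi, Finset.sum_const, mul_comm]
      rw [Finset.sum_congr rfl (fun i _ => this i), ← Finset.mul_sum, hsum, mul_zero]
    · rintro ⟨i, j⟩
      simp only [phiHom, AddMonoidHom.coe_mk, ZeroHom.coe_mk, hq (i, j)]
      by_cases hi : (i : ℕ) < 2
      · by_cases hj : j = j0
        · simp only [hi, hj, hj0, if_true, eq_self_iff_true, hva i]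
          rw [hcast i hi]; push_cast; ring
        · simp [hi, hj, hj0, show j ≠ ⟨0, hn⟩ from hj]
      · simp [hi, hva i]
  -- images of generators under φ
  have hphi_lt : ∀ i : Fin (t+2), (i : ℕ) < 2 →
      phiHom hn (Pi.single i 1) = Pi.single (i, j0) (1 : ℤ) := by
    intro i hi
    funext ij
    obtain ⟨a, b⟩ := ij
    simp only [phiHom, AddMonoidHom.coe_mk, ZeroHom.coe_mk, Pi.single_apply, Prod.mk.injEq]
    by_cases h1 : (a : ℕ) < 2 <;> by_cases h2 : b = j0 <;> by_cases h3 : a = i <;>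
      simp_all
  have hphi_ge : ∀ i : Fin (t+2), 2 ≤ (i : ℕ) →
      phiHom hn (Pi.single i 1) = ∑ j : Fin n, Pi.single (i, j) (1 : ℤ) := by
    intro i hi
    funext ij
    obtain ⟨a, b⟩ := ij
    have hr : (∑ j : Fin n, (Pi.single (i, j) (1 : ℤ) : Fin (t+2) × Fin n → ℤ)) (a, b)
        = if a = i then (1 : ℤ) else (0 : ℤ) := by
      rw [Finset.sum_apply]
      simp only [Pi.single_apply, Prod.mk.injEq]
      by_cases h3 : a = i
      · subst h3; simp [Finset.sum_ite_eq']
      · simp [h3]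
    rw [hr]
    simp only [phiHom, AddMonoidHom.coe_mk, ZeroHom.coe_mk, Pi.single_apply]
    have hai : (a : ℕ) < 2 → a ≠ i := fun h h' => by subst h'; omega
    by_cases h1 : (a : ℕ) < 2
    · simp [h1, hai h1]
    · simp [h1]
  set π : StringGroup p →+ StringGroup q := QuotientAddGroup.lift _
    ((QuotientAddGroup.mk' _).comp (phiHom hn))
    (fun v hv => by
      simp only [AddMonoidHom.mem_ker, AddMonoidHom.comp_apply, QuotientAddGroup.mk'_apply,
        QuotientAddGroup.eq_zero_iff]
      exact hker v hv) with hπdef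
  have hπ : ∀ v : Fin (t+2) → ℤ, π (QuotientAddGroup.mk v)
      = QuotientAddGroup.mk (phiHom hn v) := fun v => rfl
  have h0lt : ((0 : Fin (t+2)) : ℕ) < 2 := by simp
  have h1lt : ((1 : Fin (t+2)) : ℕ) < 2 := by simp
  refine ⟨π, ?_, ?_, ?_, ?_⟩
  · rw [xgen, hπ, hphi_lt 0 h0lt]; rfl
  · rw [xgen, hπ, hphi_lt 1 h1lt]; rfl
  · intro i hi
    rw [xgen, hπ, hphi_ge i hi]
    exact map_sum (QuotientAddGroup.mk' (AddSubgroup.closure (stringRelators q)))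
      (fun j => Pi.single (i, j) (1 : ℤ)) Finset.univ
  -- the kernel
  · set h₀ : Fin (t+2) → ℤ :=
      (p 0 / n) • Pi.single 0 1 - (p 1 / n) • Pi.single 1 1 with hh₀
    have hmkh : ((p 0 / n) • xgen p 0 - (p 1 / n) • xgen p 1 : StringGroup p)
        = QuotientAddGroup.mk h₀ := by
      rw [hh₀, QuotientAddGroup.mk_sub, QuotientAddGroup.mk_nsmul, QuotientAddGroup.mk_nsmul]
      rfl
    have hne10 : (1 : Fin (t+2)) ≠ 0 := by
      simp [Fin.ext_iff]
    refine le_antisymm ?_ (AddSubgroup.zmultiples_le.mpr ?_)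
    · intro x hx
      obtain ⟨v, rfl⟩ := QuotientAddGroup.mk_surjective x
      have hv : phiHom hn v ∈ AddSubgroup.closure (stringRelators q) := by
        rw [← QuotientAddGroup.eq_zero_iff]
        exact hx
      rw [mem_stringClosure q] at hv
      obtain ⟨b, hbsum, hbv⟩ := hv
      set c : Fin (t+2) → ℤ := fun i => b (i, j0) with hc
      have hv_lt : ∀ i : Fin (t+2), (i : ℕ) < 2 → v i = c i * ((p i / n : ℕ) : ℤ) := by
        intro i hi
        have := hbv (i, j0)
        simpa [phiHom, hi, hq (i, j0), j0, show (i : ℕ) ≤ 1 by omega] using this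
      have hb_lt : ∀ i : Fin (t+2), (i : ℕ) < 2 → ∀ j : Fin n, j ≠ j0 → b (i, j) = 0 := by
        intro i hi j hj
        have := hbv (i, j)
        simpa [phiHom, hi, hj, hq (i, j), show j ≠ ⟨0, hn⟩ from hj, show (i : ℕ) ≤ 1 by omega] using this.symm
      have hv_ge : ∀ i : Fin (t+2), ¬ (i : ℕ) < 2 → ∀ j : Fin n,
          v i = b (i, j) * (p i : ℤ) := by
        intro i hi j
        have := hbv (i, j)
        simpa [phiHom, hi, hq (i, j), show ¬ (i : ℕ) ≤ 1 by omega] using this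
      have hpne : ∀ i : Fin (t+2), (p i : ℤ) ≠ 0 := by
        intro i; have := hp i; positivity
      have hb_ge : ∀ i : Fin (t+2), ¬ (i : ℕ) < 2 → ∀ j : Fin n, b (i, j) = c i := by
        intro i hi j
        have h1 := hv_ge i hi j
        have h2 := hv_ge i hi j0
        exact mul_right_cancel₀ (hpne i) (h1.symm.trans h2)
      have hrow : ∀ i : Fin (t+2),
          (∑ j : Fin n, b (i, j)) = if (i : ℕ) < 2 then c i else (n : ℤ) * c i := by
        intro i
        by_cases hi : (i : ℕ) < 2
        · rw [if_pos hi]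
          rw [Finset.sum_eq_single j0 (fun j _ hj => hb_lt i hi j hj) (by simp)]
        · rw [if_neg hi]
          rw [Finset.sum_congr rfl (fun j _ => hb_ge i hi j)]
          simp [mul_comm]
      set S : ℤ := ∑ i : Fin t, c i.succ.succ with hS
      have hsum2 : c 0 + c 1 + (n : ℤ) * S = 0 := by
        have htot := hbsum
        rw [Fintype.sum_prod_type, Finset.sum_congr rfl (fun i _ => hrow i)] at htot
        rw [Fin.sum_univ_succ, Fin.sum_univ_succ] at htot
        have e1 : (Fin.succ 0 : Fin (t+2)) = 1 := rfl
        have hss : ∀ i : Fin t, ¬ ((i.succ.succ : Fin (t+2)) : ℕ) < 2 := by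
          intro i; simp [Fin.val_succ]
        rw [Finset.sum_congr rfl (fun i _ => if_neg (hss i))] at htot
        rw [e1, if_pos h0lt, if_pos h1lt, ← Finset.mul_sum] at htot
        rw [← hS] at htot
        linarith
      rw [AddSubgroup.mem_zmultiples_iff]
      refine ⟨c 0, ?_⟩
      rw [hmkh, ← QuotientAddGroup.mk_zsmul, QuotientAddGroup.eq]
      rw [mem_stringClosure p]
      refine ⟨fun k => if (k : ℕ) < 2 then (if k = 0 then 0 else -S) else c k, ?_, ?_⟩
      · rw [Fin.sum_univ_succ, Fin.sum_univ_succ]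
        have e1 : (Fin.succ 0 : Fin (t+2)) = 1 := rfl
        have hss : ∀ i : Fin t, ¬ ((i.succ.succ : Fin (t+2)) : ℕ) < 2 := by
          intro i; simp [Fin.val_succ]
        rw [e1, if_pos h0lt, if_pos h1lt, if_pos rfl, if_neg hne10]
        rw [Finset.sum_congr rfl (fun i _ => if_neg (hss i)), ← hS]
        ring
      · intro k
        dsimp only
        have hlhs : (-(c 0 • h₀) + v) k = v k - c 0 * h₀ k := by
          simp [sub_eq_add_neg]; ring
        rw [hlhs]
        by_cases hk : (k : ℕ) < 2
        · rcases fin_lt_two k hk with rfl | rfl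
          · have hzero : h₀ 0 = ((p 0 / n : ℕ) : ℤ) := by
              simp [hh₀, Pi.single_apply, hne10.symm]
            rw [hzero, hv_lt 0 h0lt, if_pos h0lt, if_pos rfl]
            ring
          · have hone : h₀ 1 = -((p 1 / n : ℕ) : ℤ) := by
              simp [hh₀, Pi.single_apply, hne10]
            rw [hone, hv_lt 1 h1lt, if_pos h1lt, if_neg hne10, hcast 1 h1lt]
            linear_combination (((p 1 / n : ℕ) : ℤ)) * hsum2
        · have hk0 : k ≠ 0 := fun h => by subst h; exact hk h0lt
          have hk1 : k ≠ 1 := fun h => by subst h; exact hk h1lt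
          have hz : h₀ k = 0 := by
            simp [hh₀, Pi.single_apply, hk0, hk1]
          rw [hz, if_neg hk]
          have := hv_ge k hk j0
          rw [hb_ge k hk j0] at this
          rw [this]; ring
    · rw [AddMonoidHom.mem_ker, hmkh, hπ, QuotientAddGroup.eq_zero_iff]
      have hphih : phiHom hn h₀ = ((q (0, j0) : ℤ)) • Pi.single (0, j0) 1
          - ((q (1, j0) : ℤ)) • Pi.single (1, j0) 1 := by
        rw [hh₀, map_sub, map_nsmul, map_nsmul, hphi_lt 0 h0lt, hphi_lt 1 h1lt]
        rw [hq (0, j0), hq (1, j0)]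
        simp [h0lt, h1lt, -Int.natCast_ediv]
      rw [hphih]
      exact AddSubgroup.subset_closure ⟨(0, j0), (1, j0), rfl⟩
end

section
/- Define f(x) = ((x+1)/(x−1))^2 for x ≠ 1 in an algebraically closed field k of characteristic 0, and for λ ∈ k \ {0,1} let Γ(λ) = {λ, 1/λ, 1−λ, 1/(1−λ), λ/(λ−1), (λ−1)/λ}. Then for any λ ∈ k \ {0,1} and any square root μ of λ with μ ≠ ±1, we have f(√f(μ)) ∈ Γ(λ) for a suitable choice of square root; more precisely f(ν) = λ or 1/λ whenever ν^2 = f(μ) and μ^2 = λ. -/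
theorem stmt17 {k : Type} [Field k] [IsAlgClosed k] [CharZero k]
    (lam mu nu : k) (h0 : lam ≠ 0) (h1 : lam ≠ 1)
    (hmu : mu ^ 2 = lam) (hmu1 : mu ≠ 1) (hmu2 : mu ≠ -1)
    (hnu : nu ^ 2 = ((mu + 1) / (mu - 1)) ^ 2) :
    ((nu + 1) / (nu - 1)) ^ 2 = lam ∨ ((nu + 1) / (nu - 1)) ^ 2 = lam⁻¹ := by
  have hm0 : mu ≠ 0 := by rintro rfl; simp at hmu; exact h0 hmu.symm
  have hm1 : mu - 1 ≠ 0 := sub_ne_zero.mpr hmu1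
  have hcase : nu = (mu + 1) / (mu - 1) ∨ nu = -((mu + 1) / (mu - 1)) := by
    have hfac : (nu - (mu + 1) / (mu - 1)) * (nu + (mu + 1) / (mu - 1)) = 0 := by
      have : (nu - (mu + 1) / (mu - 1)) * (nu + (mu + 1) / (mu - 1)) =
          nu ^ 2 - ((mu + 1) / (mu - 1)) ^ 2 := by ring
      rw [this, hnu, sub_self]
    rcases mul_eq_zero.mp hfac with h' | h'
    · left; exact sub_eq_zero.mp h'
    · right; exact eq_neg_of_add_eq_zero_left h'
  rcases hcase with h | h
  · left
    have hn1 : nu - 1 ≠ 0 := by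
      rw [h]; intro hc
      field_simp at hc
      exact two_ne_zero (α := k) (by linear_combination hc)
    rw [h, ← hmu]
    field_simp
    ring
  · right
    have hn1 : nu - 1 ≠ 0 := by
      rw [h]; intro hc
      field_simp at hc
      exact hm0 (by linear_combination (-1/2 : k) * hc)
    rw [h, ← hmu]
    field_simp
    ring_nf
    rw [← mul_pow, mul_inv_cancel₀ hm0, one_pow]
end
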